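/- Let μ be a Lyndon word and let x be a position inside an occurrence of μ at position r in a string S, i.e., r < x < r + |μ| and S[r..r+|μ|) = μ, and suppose S_r has |μ| further characters after the occurrence forming another copy of μ (i.e., S[r..r+2|μ|) = μμ). Then S_{r+|μ|} ≺ S_x for all x ∈ (r, r+|μ|). -/

import Mathlib

variable {α : Type*} [LinearOrder α]

/-- A Lyndon word: nonempty and strictly smaller than all of its proper nonempty suffixes. -/
def IsLyndon (s : List α) : Prop :=
  s ≠ [] ∧ ∀ i, 0 < i → i < s.length → List.Lex (· < ·) s (s.drop i)

/-- The `i`-th suffix of `S` (1-indexed); `sfx S 0 = []` plays the role of the sentinel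
suffix `S₀ = $`, and `sfx S (n+1) = []` plays the role of `S_{n+1} = $`
(the empty list is lexicographically smaller than every nonempty list). -/
def sfx (S : List α) (i : ℕ) : List α := if i = 0 then [] else S.drop (i - 1)

open scoped Classical in
/-- `pss S j = max {k ∈ [0,j) : S_k ≺ S_j}`. -/
noncomputable def pss (S : List α) (j : ℕ) : ℕ :=
  Nat.findGreatest (fun k => List.Lex (· < ·) (sfx S k) (sfx S j)) (j - 1)

/-- `nss S i = min {j ∈ (i, n+1] : S_j ≺ S_i}`. -/
noncomputable def nss (S : List α) (i : ℕ) : ℕ :=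
  sInf {j | i < j ∧ j ≤ S.length + 1 ∧ List.Lex (· < ·) (sfx S j) (sfx S i)}

/-- Length of the longest common prefix of two lists. -/
def lcp : List α → List α → ℕ
  | a :: s, b :: t => if a = b then lcp s t + 1 else 0
  | _, _ => 0

/-- The PSS closure: all iterates of `pss` starting from `j`. -/
noncomputable def pssClosure (S : List α) (j : ℕ) : Set ℕ :=
  {k | ∃ m, (pss S)^[m] j = k}

open scoped Classical in
/-- Size of the subtree of node `i` in the PSS tree of `S`. -/
noncomputable def subtreeSize (S : List α) (i : ℕ) : ℕ :=
  ((Finset.range (S.length + 1)).filter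
    (fun j => j = i ∨ ∃ m, 0 < m ∧ (pss S)^[m] j = i)).card

open scoped Classical in
/-- `lam S i`: length of the longest Lyndon word starting at position `i` (1-indexed). -/
noncomputable def lam (S : List α) (i : ℕ) : ℕ :=
  Nat.findGreatest (fun ℓ => IsLyndon ((S.drop (i - 1)).take ℓ)) (S.length + 1 - i)

lemma lex_append_of_lex {a b : List α} (u v : List α)
    (h : List.Lex (· < ·) a b) (hlen : b.length ≤ a.length) :
    List.Lex (· < ·) (a ++ u) (b ++ v) := by
  induction h with
  | nil => simp at hlen
  | @cons x l1 l2 _ ih =>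
      exact List.Lex.cons (ih (by simpa using hlen))
  | rel h => exact List.Lex.rel h

/-- if `S[r..r+2|μ|) = μμ` with `μ` Lyndon, then the suffix starting at the
next repetition boundary `r + |μ|` is smaller than every suffix starting strictly inside
the preceding repetition. -/
theorem stmt11 (S μ : List α) (hμ : IsLyndon μ) (r : ℕ) (h1 : 1 ≤ r)
    (hfit : r - 1 + 2 * μ.length ≤ S.length)
    (hocc : (S.drop (r - 1)).take (2 * μ.length) = μ ++ μ) :
    ∀ x, r < x → x < r + μ.length →
      List.Lex (· < ·) (sfx S (r + μ.length)) (sfx S x) := by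
  intro x hrx hxr
  obtain ⟨hμne, hlyn⟩ := hμ
  have hμpos : 0 < μ.length := List.length_pos_iff.mpr hμne
  set R := S.drop (r - 1 + 2 * μ.length) with hR
  have hD : S.drop (r - 1) = μ ++ (μ ++ R) := by
    conv_lhs => rw [← List.take_append_drop (2 * μ.length) (S.drop (r - 1))]
    rw [hocc, List.drop_drop, List.append_assoc]
  have h1' : S.drop (r + μ.length - 1) = μ ++ R := by
    have : S.drop (r + μ.length - 1) = (S.drop (r - 1)).drop μ.length := by
      rw [List.drop_drop]; congr 1; omega
    rw [this, hD, List.drop_left]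
  have h2' : S.drop (x - 1) = μ.drop (x - r) ++ (μ ++ R) := by
    have : S.drop (x - 1) = (S.drop (r - 1)).drop (x - r) := by
      rw [List.drop_drop]; congr 1; omega
    rw [this, hD, List.drop_append]
    have : x - r - μ.length = 0 := by omega
    rw [this, List.drop_zero]
  have hlex : List.Lex (· < ·) μ (μ.drop (x - r)) :=
    hlyn (x - r) (by omega) (by omega)
  have hlen : (μ.drop (x - r)).length ≤ μ.length := by
    simp [List.length_drop]
  have : List.Lex (· < ·) (μ ++ R) (μ.drop (x - r) ++ (μ ++ R)) :=
    lex_append_of_lex R (μ ++ R) hlex hlen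
  simpa [sfx, h1', h2', hμne, show r + μ.length ≠ 0 by omega,
    show x ≠ 0 by omega] using this
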